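/- arXiv:1206.4379 — 2 statements merged into one kernel-verified Lean document; each statement's English description precedes it below -/
import Mathlib

section
/- Let V ⊂ {(r,z) : r ≥ 0} ⊂ ℝ² be a bounded open set whose closure contains the origin, and let ρ(r,z) = √(r²+z²). If v satisfies ‖v‖²_{K^m_{a,1}(V)} := Σ_{|α| ≤ m} ∫_V ρ^{2(|α|-a)} (∂^α v)² r dr dz < ∞ for some integer m ≥ 0 and real a, then for each 0 ≤ l ≤ m, ‖ρ^{-a+l} v‖²_{H^l_1(V)} ≤ C ‖v‖²_{K^m_{a,1}(V)}, where ‖w‖²_{H^l_1(V)} = Σ_{|α| ≤ l} ∫_V (∂^α w)² r dr dz and C depends only on m, a, and the diameter of V. -/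
open MeasureTheory

noncomputable section

abbrev P2 := ℝ × ℝ

/-- ρ(r,z) = √(r² + z²). -/
def rho2 (p : P2) : ℝ := Real.sqrt (p.1 ^ 2 + p.2 ^ 2)

def pdr (f : P2 → ℝ) : P2 → ℝ := fun p => fderiv ℝ f p (1, 0)
def pdz (f : P2 → ℝ) : P2 → ℝ := fun p => fderiv ℝ f p (0, 1)

/-- ∂^α = ∂_r^{α₁} ∂_z^{α₂}. -/
def D2 (α : ℕ × ℕ) (f : P2 → ℝ) : P2 → ℝ := pdr^[α.1] (pdz^[α.2] f)

def wt2 (α : ℕ × ℕ) : ℕ := α.1 + α.2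

/-- Multi-indices with |α| ≤ m. -/
def idx2 (m : ℕ) : Finset (ℕ × ℕ) :=
  ((Finset.range (m+1)) ×ˢ (Finset.range (m+1))).filter fun α => wt2 α ≤ m

/-- ‖v‖²_{K^m_{a,1}(V)} = Σ_{|α|≤m} ∫_V ρ^{2(|α|-a)} (∂^α v)² r dr dz. -/
def K2 (V : Set P2) (m : ℕ) (a : ℝ) (v : P2 → ℝ) : ℝ :=
  ∑ α ∈ idx2 m, ∫ p in V, rho2 p ^ (2 * ((wt2 α : ℝ) - a)) * (D2 α v p) ^ 2 * p.1

/-- ‖w‖²_{H^l_1(V)} = Σ_{|α|≤l} ∫_V (∂^α w)² r dr dz. -/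
def H21 (V : Set P2) (l : ℕ) (w : P2 → ℝ) : ℝ :=
  ∑ α ∈ idx2 l, ∫ p in V, (D2 α w p) ^ 2 * p.1

section AUX

def uu (p : P2) : ℝ := p.1 ^ 2 + p.2 ^ 2

structure Tm where
  c : ℝ
  e : ℝ
  i : ℕ
  j : ℕ
  b1 : ℕ
  b2 : ℕ

def Tm.eval (T : Tm) (v : P2 → ℝ) (p : P2) : ℝ :=
  T.c * uu p ^ T.e * p.1 ^ T.i * p.2 ^ T.j * D2 (T.b1, T.b2) v p

def evalL (L : List Tm) (v : P2 → ℝ) (p : P2) : ℝ := (L.map (fun T => T.eval v p)).sum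

def pdrT (T : Tm) : List Tm :=
  [⟨T.c * (2 * T.e), T.e - 1, T.i + 1, T.j, T.b1, T.b2⟩,
   ⟨T.c * T.i, T.e, T.i - 1, T.j, T.b1, T.b2⟩,
   ⟨T.c, T.e, T.i, T.j, T.b1 + 1, T.b2⟩]

def pdzT (T : Tm) : List Tm :=
  [⟨T.c * (2 * T.e), T.e - 1, T.i, T.j + 1, T.b1, T.b2⟩,
   ⟨T.c * T.j, T.e, T.i, T.j - 1, T.b1, T.b2⟩,
   ⟨T.c, T.e, T.i, T.j, T.b1, T.b2 + 1⟩]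

variable {V : Set P2}

lemma mem_V_pos (hVo : IsOpen V) (hVr : V ⊆ {p : P2 | 0 ≤ p.1}) {p : P2} (hp : p ∈ V) :
    0 < p.1 := by
  rcases Metric.isOpen_iff.1 hVo p hp with ⟨ε, hε, hball⟩
  have h2 : (p.1 - ε / 2, p.2) ∈ V := by
    apply hball
    have hd : dist ((p.1 - ε / 2, p.2) : P2) p < ε := by
      rw [Prod.dist_eq]
      simp only [Real.dist_eq]
      rw [show p.1 - ε / 2 - p.1 = -(ε / 2) by ring, abs_neg,
        abs_of_pos (half_pos hε)]
      simp [half_lt_self hε, hε]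
    exact hd
  have := hVr h2
  simp only [Set.mem_setOf_eq] at this
  linarith

lemma uu_pos (hVo : IsOpen V) (hVr : V ⊆ {p : P2 | 0 ≤ p.1}) {p : P2} (hp : p ∈ V) :
    0 < uu p := by
  have := mem_V_pos hVo hVr hp
  have : 0 < p.1 ^ 2 := by positivity
  have h2 : 0 ≤ p.2 ^ 2 := sq_nonneg _
  unfold uu; linarith

lemma rho2_pos (hVo : IsOpen V) (hVr : V ⊆ {p : P2 | 0 ≤ p.1}) {p : P2} (hp : p ∈ V) :
    0 < rho2 p := Real.sqrt_pos.2 (uu_pos hVo hVr hp)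

lemma rho2_nonneg (p : P2) : 0 ≤ rho2 p := Real.sqrt_nonneg _

lemma rho2_rpow_eq (p : P2) (s : ℝ) : rho2 p ^ s = uu p ^ (s / 2) := by
  have h : (0:ℝ) ≤ uu p := by unfold uu; positivity
  rw [rho2, show p.1 ^ 2 + p.2 ^ 2 = uu p from rfl, Real.sqrt_eq_rpow,
    ← Real.rpow_mul h]
  norm_num
  ring_nf

lemma D2_zero (f : P2 → ℝ) : D2 (0, 0) f = f := rfl

lemma D2_succ1 (b1 b2 : ℕ) (f : P2 → ℝ) : D2 (b1 + 1, b2) f = pdr (D2 (b1, b2) f) := by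
  simp [D2, Function.iterate_succ_apply']

lemma D2_succ2 (b2 : ℕ) (f : P2 → ℝ) : D2 (0, b2 + 1) f = pdz (D2 (0, b2) f) := by
  simp [D2, Function.iterate_succ_apply']

lemma smooth_pdr (hVo : IsOpen V) {f : P2 → ℝ} (hf : ContDiffOn ℝ (⊤ : ℕ∞) f V) :
    ContDiffOn ℝ (⊤ : ℕ∞) (pdr f) V :=
  (hf.fderiv_of_isOpen hVo (le_of_eq ENat.coe_top_add_one)).clm_apply contDiffOn_const

lemma smooth_pdz (hVo : IsOpen V) {f : P2 → ℝ} (hf : ContDiffOn ℝ (⊤ : ℕ∞) f V) :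
    ContDiffOn ℝ (⊤ : ℕ∞) (pdz f) V :=
  (hf.fderiv_of_isOpen hVo (le_of_eq ENat.coe_top_add_one)).clm_apply contDiffOn_const

lemma smooth_D2 (hVo : IsOpen V) {v : P2 → ℝ} (hv : ContDiffOn ℝ (⊤ : ℕ∞) v V)
    (β : ℕ × ℕ) : ContDiffOn ℝ (⊤ : ℕ∞) (D2 β v) V := by
  obtain ⟨b1, b2⟩ := β
  induction b1 with
  | zero =>
    induction b2 with
    | zero => exact hv
    | succ n ih => rw [D2_succ2]; exact smooth_pdz hVo ih
  | succ n ih => rw [D2_succ1]; exact smooth_pdr hVo ih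

end AUX

section DERIV

variable {V : Set P2}

lemma eval_hasFDerivAt (hVo : IsOpen V) (hVr : V ⊆ {p : P2 | 0 ≤ p.1}) (T : Tm)
    {v : P2 → ℝ} (hv : ContDiffOn ℝ (⊤ : ℕ∞) v V) {p : P2} (hp : p ∈ V) :
    ∃ Φ : P2 →L[ℝ] ℝ, HasFDerivAt (T.eval v) Φ p ∧
      Φ (1, 0) = evalL (pdrT T) v p ∧
      (T.b1 = 0 → Φ (0, 1) = evalL (pdzT T) v p) := by
  have hup : 0 < uu p := uu_pos hVo hVr hp
  set g := D2 (T.b1, T.b2) v with hgdef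
  have hg : HasFDerivAt g (fderiv ℝ g p) p := by
    refine (((smooth_D2 hVo hv (T.b1, T.b2)).contDiffAt (hVo.mem_nhds hp)).differentiableAt ?_).hasFDerivAt
    simp
  have hu : HasFDerivAt uu
      ((2 * p.1) • ContinuousLinearMap.fst ℝ ℝ ℝ + (2 * p.2) • ContinuousLinearMap.snd ℝ ℝ ℝ) p := by
    have h1 : HasFDerivAt (fun q : P2 => q.1 ^ 2)
        ((2 * p.1) • ContinuousLinearMap.fst ℝ ℝ ℝ) p := by
      have := (hasDerivAt_pow 2 p.1).comp_hasFDerivAt p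
        (hasFDerivAt_fst (p := p) (𝕜 := ℝ))
      norm_num at this
      exact this
    have h2 : HasFDerivAt (fun q : P2 => q.2 ^ 2)
        ((2 * p.2) • ContinuousLinearMap.snd ℝ ℝ ℝ) p := by
      have := (hasDerivAt_pow 2 p.2).comp_hasFDerivAt p
        (hasFDerivAt_snd (p := p) (𝕜 := ℝ))
      norm_num at this
      exact this
    exact h1.add h2
  have h1 : HasFDerivAt (fun q : P2 => uu q ^ T.e)
      ((T.e * uu p ^ (T.e - 1)) •
        ((2 * p.1) • ContinuousLinearMap.fst ℝ ℝ ℝ + (2 * p.2) • ContinuousLinearMap.snd ℝ ℝ ℝ)) p :=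
    (Real.hasDerivAt_rpow_const (Or.inl hup.ne')).comp_hasFDerivAt p hu
  have h2 : HasFDerivAt (fun q : P2 => q.1 ^ T.i)
      (((T.i : ℝ) * p.1 ^ (T.i - 1)) • ContinuousLinearMap.fst ℝ ℝ ℝ) p :=
    (hasDerivAt_pow T.i p.1).comp_hasFDerivAt p (hasFDerivAt_fst (p := p) (𝕜 := ℝ))
  have h3 : HasFDerivAt (fun q : P2 => q.2 ^ T.j)
      (((T.j : ℝ) * p.2 ^ (T.j - 1)) • ContinuousLinearMap.snd ℝ ℝ ℝ) p :=
    (hasDerivAt_pow T.j p.2).comp_hasFDerivAt p (hasFDerivAt_snd (p := p) (𝕜 := ℝ))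
  have hbig := (((h1.const_mul T.c).mul h2).mul h3).mul hg
  refine ⟨_, hbig, ?_, ?_⟩
  · have hdr : fderiv ℝ g p (1, 0) = D2 (T.b1 + 1, T.b2) v p := by
      rw [D2_succ1]; rfl
    simp only [ContinuousLinearMap.add_apply, ContinuousLinearMap.smul_apply,
      ContinuousLinearMap.coe_fst', ContinuousLinearMap.coe_snd', smul_eq_mul, hdr,
      evalL, pdrT, List.map, List.sum_cons, List.sum_nil, Tm.eval, Pi.mul_apply]
    rw [hgdef]
    rw [pow_succ]
    ring
  · intro hb
    have hdz : fderiv ℝ g p (0, 1) = D2 (T.b1, T.b2 + 1) v p := by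
      rw [hgdef, hb, D2_succ2]; rfl
    simp only [ContinuousLinearMap.add_apply, ContinuousLinearMap.smul_apply,
      ContinuousLinearMap.coe_fst', ContinuousLinearMap.coe_snd', smul_eq_mul, hdz,
      evalL, pdzT, List.map, List.sum_cons, List.sum_nil, Tm.eval, Pi.mul_apply]
    rw [hgdef]
    rw [pow_succ]
    ring

end DERIV

section REP

variable {V : Set P2}

lemma evalL_cons (T : Tm) (L : List Tm) (v : P2 → ℝ) (p : P2) :
    evalL (T :: L) v p = T.eval v p + evalL L v p := by simp [evalL]

lemma evalL_append (L₁ L₂ : List Tm) (v : P2 → ℝ) (p : P2) :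
    evalL (L₁ ++ L₂) v p = evalL L₁ v p + evalL L₂ v p := by simp [evalL]

lemma evalL_hasFDerivAt (hVo : IsOpen V) (hVr : V ⊆ {p : P2 | 0 ≤ p.1}) (L : List Tm)
    {v : P2 → ℝ} (hv : ContDiffOn ℝ (⊤ : ℕ∞) v V) {p : P2} (hp : p ∈ V) :
    ∃ Φ : P2 →L[ℝ] ℝ, HasFDerivAt (evalL L v) Φ p ∧
      Φ (1, 0) = evalL (L.flatMap pdrT) v p ∧
      ((∀ T ∈ L, T.b1 = 0) → Φ (0, 1) = evalL (L.flatMap pdzT) v p) := by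
  induction L with
  | nil =>
    refine ⟨0, ?_, by simp [evalL], fun _ => by simp [evalL]⟩
    have : evalL [] v = fun _ : P2 => (0 : ℝ) := rfl
    rw [this]
    exact hasFDerivAt_const 0 p
  | cons T L ih =>
    obtain ⟨Φ₂, h₂, h₂r, h₂z⟩ := ih
    obtain ⟨Φ₁, h₁, h₁r, h₁z⟩ := eval_hasFDerivAt hVo hVr T hv hp
    refine ⟨Φ₁ + Φ₂, ?_, ?_, ?_⟩
    · have : evalL (T :: L) v = fun q => T.eval v q + evalL L v q := by
        funext q; exact evalL_cons T L v q
      rw [this]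
      exact h₁.add h₂
    · simp only [ContinuousLinearMap.add_apply, h₁r, h₂r, List.flatMap_cons, evalL_append]
    · intro hb
      simp only [ContinuousLinearMap.add_apply, List.flatMap_cons, evalL_append,
        h₁z (hb T List.mem_cons_self), h₂z (fun S hS => hb S (List.mem_cons_of_mem T hS))]

def TInv (s : ℝ) (k : ℕ) (T : Tm) : Prop :=
  T.c = 0 ∨ (2 * T.e + T.i + T.j = s - k + (T.b1 + T.b2) ∧ T.b1 + T.b2 ≤ k)

lemma tinv_pdzT {s : ℝ} {k : ℕ} {T T' : Tm} (h : TInv s k T) (h' : T' ∈ pdzT T) :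
    TInv s (k + 1) T' := by
  simp only [pdzT, List.mem_cons, List.not_mem_nil, or_false] at h'
  rcases h with hc | ⟨he, hb⟩
  · rcases h' with rfl | rfl | rfl <;> simp [TInv, hc]
  · rcases h' with rfl | rfl | rfl
    · refine Or.inr ⟨?_, by simpa using Nat.le_succ_of_le hb⟩
      push_cast
      push_cast at he
      ring_nf
      ring_nf at he
      linarith
    · rcases Nat.eq_zero_or_pos T.j with hj | hj
      · exact Or.inl (by simp [hj])
      · refine Or.inr ⟨?_, by simpa using Nat.le_succ_of_le hb⟩
        have : ((T.j - 1 : ℕ) : ℝ) = (T.j : ℝ) - 1 := by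
          rw [Nat.cast_sub hj]; norm_num
        simp only [this]
        push_cast
        push_cast at he
        linarith
    · refine Or.inr ⟨?_, by exact (by omega : T.b1 + (T.b2 + 1) ≤ k + 1)⟩
      push_cast
      push_cast at he
      linarith

lemma tinv_pdrT {s : ℝ} {k : ℕ} {T T' : Tm} (h : TInv s k T) (h' : T' ∈ pdrT T) :
    TInv s (k + 1) T' := by
  simp only [pdrT, List.mem_cons, List.not_mem_nil, or_false] at h'
  rcases h with hc | ⟨he, hb⟩
  · rcases h' with rfl | rfl | rfl <;> simp [TInv, hc]
  · rcases h' with rfl | rfl | rfl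
    · refine Or.inr ⟨?_, by simpa using Nat.le_succ_of_le hb⟩
      push_cast
      push_cast at he
      linarith
    · rcases Nat.eq_zero_or_pos T.i with hi | hi
      · exact Or.inl (by simp [hi])
      · refine Or.inr ⟨?_, by simpa using Nat.le_succ_of_le hb⟩
        have : ((T.i - 1 : ℕ) : ℝ) = (T.i : ℝ) - 1 := by
          rw [Nat.cast_sub hi]; norm_num
        simp only [this]
        push_cast
        push_cast at he
        linarith
    · refine Or.inr ⟨?_, by exact (by omega : T.b1 + 1 + T.b2 ≤ k + 1)⟩
      push_cast
      push_cast at he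
      linarith

lemma rep0 (hVo : IsOpen V) (hVr : V ⊆ {p : P2 | 0 ≤ p.1}) (s : ℝ) (n : ℕ) :
    ∃ L : List Tm, (∀ T ∈ L, T.b1 = 0) ∧ (∀ T ∈ L, TInv s n T) ∧
      ∀ v : P2 → ℝ, ContDiffOn ℝ (⊤ : ℕ∞) v V → ∀ p ∈ V,
        D2 (0, n) (fun q => rho2 q ^ s * v q) p = evalL L v p := by
  induction n with
  | zero =>
    refine ⟨[⟨1, s / 2, 0, 0, 0, 0⟩], by simp, ?_, ?_⟩
    · intro T hT
      simp only [List.mem_cons, List.not_mem_nil, or_false] at hT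
      subst hT
      refine Or.inr ⟨by push_cast; ring, le_refl _⟩
    · intro v hv p hp
      simp only [evalL, List.map, List.sum_cons, List.sum_nil, Tm.eval]
      rw [show D2 (0, 0) (fun q => rho2 q ^ s * v q) p = rho2 p ^ s * v p from rfl,
        show D2 (0, 0) v p = v p from rfl, rho2_rpow_eq]
      ring
  | succ n ih =>
    obtain ⟨L, hb, hinv, heq⟩ := ih
    refine ⟨L.flatMap pdzT, ?_, ?_, ?_⟩
    · intro T' hT'
      rw [List.mem_flatMap] at hT'
      obtain ⟨T, hT, hT'⟩ := hT'
      have := hb T hT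
      simp only [pdzT, List.mem_cons, List.not_mem_nil, or_false] at hT'
      rcases hT' with rfl | rfl | rfl <;> simpa using this
    · intro T' hT'
      rw [List.mem_flatMap] at hT'
      obtain ⟨T, hT, hT'⟩ := hT'
      exact tinv_pdzT (hinv T hT) hT'
    · intro v hv p hp
      obtain ⟨Φ, hΦ, _, hΦz⟩ := evalL_hasFDerivAt hVo hVr L hv hp
      have hEE : D2 (0, n) (fun q => rho2 q ^ s * v q) =ᶠ[nhds p] evalL L v :=
        Filter.eventuallyEq_of_mem (hVo.mem_nhds hp) (fun q hq => heq v hv q hq)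
      rw [D2_succ2, pdz, hEE.fderiv_eq, hΦ.fderiv]
      exact hΦz hb

lemma rep (hVo : IsOpen V) (hVr : V ⊆ {p : P2 | 0 ≤ p.1}) (s : ℝ) (k n : ℕ) :
    ∃ L : List Tm, (∀ T ∈ L, TInv s (k + n) T) ∧
      ∀ v : P2 → ℝ, ContDiffOn ℝ (⊤ : ℕ∞) v V → ∀ p ∈ V,
        D2 (k, n) (fun q => rho2 q ^ s * v q) p = evalL L v p := by
  induction k with
  | zero =>
    obtain ⟨L, _, hinv, heq⟩ := rep0 hVo hVr s n
    exact ⟨L, by simpa using hinv, heq⟩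
  | succ k ih =>
    obtain ⟨L, hinv, heq⟩ := ih
    refine ⟨L.flatMap pdrT, ?_, ?_⟩
    · intro T' hT'
      rw [List.mem_flatMap] at hT'
      obtain ⟨T, hT, hT'⟩ := hT'
      have := tinv_pdrT (hinv T hT) hT'
      have heq2 : k + n + 1 = k + 1 + n := by omega
      rwa [heq2] at this
    · intro v hv p hp
      obtain ⟨Φ, hΦ, hΦr, _⟩ := evalL_hasFDerivAt hVo hVr L hv hp
      have hEE : D2 (k, n) (fun q => rho2 q ^ s * v q) =ᶠ[nhds p] evalL L v :=
        Filter.eventuallyEq_of_mem (hVo.mem_nhds hp) (fun q hq => heq v hv q hq)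
      rw [D2_succ1, pdr, hEE.fderiv_eq, hΦ.fderiv]
      exact hΦr

end REP

section EST

variable {V : Set P2}

def Sm (m : ℕ) (a : ℝ) (v : P2 → ℝ) (p : P2) : ℝ :=
  ∑ β ∈ idx2 m, rho2 p ^ ((wt2 β : ℝ) - a) * |D2 β v p|

lemma Sm_nonneg (m : ℕ) (a : ℝ) (v : P2 → ℝ) (p : P2) : 0 ≤ Sm m a v p :=
  Finset.sum_nonneg fun β _ => mul_nonneg (Real.rpow_nonneg (rho2_nonneg p) _) (abs_nonneg _)

lemma mem_idx2 {b1 b2 m : ℕ} (h : b1 + b2 ≤ m) : (b1, b2) ∈ idx2 m := by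
  simp only [idx2, Finset.mem_filter, Finset.mem_product, Finset.mem_range, wt2]
  refine Finset.mem_filter.2 ⟨?_, ?_⟩
  · simp only [Finset.mem_product, Finset.mem_range]
    omega
  · omega

lemma abs_fst_le_rho2 (p : P2) : |p.1| ≤ rho2 p := by
  calc |p.1| = Real.sqrt (p.1 ^ 2) := (Real.sqrt_sq_eq_abs p.1).symm
  _ ≤ rho2 p := Real.sqrt_le_sqrt (by nlinarith [sq_nonneg p.2])

lemma abs_snd_le_rho2 (p : P2) : |p.2| ≤ rho2 p := by
  calc |p.2| = Real.sqrt (p.2 ^ 2) := (Real.sqrt_sq_eq_abs p.2).symm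
  _ ≤ rho2 p := Real.sqrt_le_sqrt (by nlinarith [sq_nonneg p.1])

lemma eval_bound (hVo : IsOpen V) (hVr : V ⊆ {p : P2 | 0 ≤ p.1})
    {M : ℝ} (hM1 : 1 ≤ M) (hMV : ∀ p ∈ V, rho2 p ≤ M)
    {l m : ℕ} (hlm : l ≤ m) {k : ℕ} (hkl : k ≤ l) {a : ℝ} {T : Tm}
    (hT : TInv ((l : ℝ) - a) k T) (v : P2 → ℝ) {p : P2} (hp : p ∈ V) :
    |T.eval v p| ≤ |T.c| * M ^ m * Sm m a v p := by
  rcases hT with hc | ⟨he, hb⟩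
  · simp [Tm.eval, hc]
  · have hρ : 0 < rho2 p := rho2_pos hVo hVr hp
    have huu0 : (0 : ℝ) ≤ uu p := by unfold uu; positivity
    have h2e : uu p ^ T.e = rho2 p ^ (2 * T.e) := by
      rw [rho2_rpow_eq p (2 * T.e)]
      congr 1
      ring
    have hβm : (T.b1, T.b2) ∈ idx2 m := mem_idx2 (le_trans (le_trans hb hkl) hlm)
    have hterm : rho2 p ^ ((wt2 (T.b1, T.b2) : ℝ) - a) * |D2 (T.b1, T.b2) v p| ≤ Sm m a v p :=
      Finset.single_le_sum (f := fun β => rho2 p ^ ((wt2 β : ℝ) - a) * |D2 β v p|)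
        (fun β _ => mul_nonneg (Real.rpow_nonneg (rho2_nonneg p) _) (abs_nonneg _)) hβm
    have key : uu p ^ T.e * |p.1| ^ T.i * |p.2| ^ T.j
        ≤ M ^ m * rho2 p ^ (((T.b1 + T.b2 : ℕ) : ℝ) - a) := by
      have step1 : uu p ^ T.e * |p.1| ^ T.i * |p.2| ^ T.j
          ≤ rho2 p ^ (2 * T.e) * rho2 p ^ (T.i : ℕ) * rho2 p ^ (T.j : ℕ) := by
        rw [h2e]
        gcongr <;> first
          | exact abs_fst_le_rho2 p
          | exact abs_snd_le_rho2 p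
          | exact Real.rpow_nonneg (rho2_nonneg p) _
          | exact mul_nonneg (Real.rpow_nonneg (rho2_nonneg p) _) (pow_nonneg (abs_nonneg _) _)
      have step2 : rho2 p ^ (2 * T.e) * rho2 p ^ (T.i : ℕ) * rho2 p ^ (T.j : ℕ)
          = rho2 p ^ (((T.b1 + T.b2 : ℕ) : ℝ) - a) * rho2 p ^ ((l - k : ℕ)) := by
        rw [← Real.rpow_natCast (rho2 p) T.i, ← Real.rpow_natCast (rho2 p) T.j,
          ← Real.rpow_natCast (rho2 p) (l - k), ← Real.rpow_add hρ, ← Real.rpow_add hρ,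
          ← Real.rpow_add hρ]
        congr 1
        have hcast : ((l - k : ℕ) : ℝ) = (l : ℝ) - k := by
          rw [Nat.cast_sub hkl]
        rw [hcast]
        push_cast at he ⊢
        linarith
      have step3 : rho2 p ^ ((l - k : ℕ)) ≤ M ^ m := by
        calc rho2 p ^ (l - k) ≤ M ^ (l - k) := pow_le_pow_left₀ hρ.le (hMV p hp) _
        _ ≤ M ^ m := pow_le_pow_right₀ hM1 (by omega)
      calc uu p ^ T.e * |p.1| ^ T.i * |p.2| ^ T.j
          ≤ rho2 p ^ (((T.b1 + T.b2 : ℕ) : ℝ) - a) * rho2 p ^ ((l - k : ℕ)) := by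
            rw [← step2]; exact step1
      _ ≤ rho2 p ^ (((T.b1 + T.b2 : ℕ) : ℝ) - a) * M ^ m := by
            gcongr <;> exact Real.rpow_nonneg (rho2_nonneg p) _
      _ = M ^ m * rho2 p ^ (((T.b1 + T.b2 : ℕ) : ℝ) - a) := by ring
    have habs : |T.eval v p|
        = |T.c| * (uu p ^ T.e * |p.1| ^ T.i * |p.2| ^ T.j) * |D2 (T.b1, T.b2) v p| := by
      simp only [Tm.eval, abs_mul, abs_pow]
      rw [abs_of_nonneg (Real.rpow_nonneg huu0 _)]
      ring
    rw [habs]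
    calc |T.c| * (uu p ^ T.e * |p.1| ^ T.i * |p.2| ^ T.j) * |D2 (T.b1, T.b2) v p|
        ≤ |T.c| * (M ^ m * rho2 p ^ (((T.b1 + T.b2 : ℕ) : ℝ) - a)) * |D2 (T.b1, T.b2) v p| := by
          gcongr
      _ = |T.c| * M ^ m * (rho2 p ^ ((wt2 (T.b1, T.b2) : ℝ) - a) * |D2 (T.b1, T.b2) v p|) := by
          simp only [wt2]
          ring
      _ ≤ |T.c| * M ^ m * Sm m a v p := by
          gcongr <;> positivity

lemma evalL_bound (hVo : IsOpen V) (hVr : V ⊆ {p : P2 | 0 ≤ p.1})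
    {M : ℝ} (hM1 : 1 ≤ M) (hMV : ∀ p ∈ V, rho2 p ≤ M)
    {l m : ℕ} (hlm : l ≤ m) {k : ℕ} (hkl : k ≤ l) {a : ℝ} {L : List Tm}
    (hL : ∀ T ∈ L, TInv ((l : ℝ) - a) k T) (v : P2 → ℝ) {p : P2} (hp : p ∈ V) :
    |evalL L v p| ≤ (L.map fun T => |T.c|).sum * M ^ m * Sm m a v p := by
  induction L with
  | nil => simp [evalL]
  | cons T L ih =>
    have h1 := eval_bound hVo hVr hM1 hMV hlm hkl (hL T List.mem_cons_self) v hp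
    have h2 := ih (fun S hS => hL S (List.mem_cons_of_mem T hS))
    rw [evalL_cons]
    calc |T.eval v p + evalL L v p| ≤ |T.eval v p| + |evalL L v p| := abs_add_le _ _
      _ ≤ |T.c| * M ^ m * Sm m a v p + (L.map fun T => |T.c|).sum * M ^ m * Sm m a v p := by
          linarith
      _ = ((T :: L).map fun T => |T.c|).sum * M ^ m * Sm m a v p := by
          simp only [List.map, List.sum_cons]
          ring

end EST

section INT

variable {V : Set P2}

lemma smooth_w (hVo : IsOpen V) (hVr : V ⊆ {p : P2 | 0 ≤ p.1}) (s : ℝ) {v : P2 → ℝ}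
    (hv : ContDiffOn ℝ (⊤ : ℕ∞) v V) :
    ContDiffOn ℝ (⊤ : ℕ∞) (fun q => rho2 q ^ s * v q) V := by
  have huu : ContDiff ℝ (⊤ : ℕ∞) uu := by
    unfold uu
    exact (contDiff_fst.pow 2).add (contDiff_snd.pow 2)
  have h1 : ContDiffOn ℝ (⊤ : ℕ∞) (fun q => uu q ^ (s / 2)) V :=
    huu.contDiffOn.rpow_const_of_ne (fun q hq => (uu_pos hVo hVr hq).ne')
  have h2 : (fun q : P2 => rho2 q ^ s) = fun q => uu q ^ (s / 2) :=
    funext fun q => rho2_rpow_eq q s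
  exact (h2 ▸ h1).mul hv

lemma per_alpha (hVo : IsOpen V) (hVr : V ⊆ {p : P2 | 0 ≤ p.1})
    {M : ℝ} (hM1 : 1 ≤ M) (hMV : ∀ p ∈ V, rho2 p ≤ M)
    (m : ℕ) (a : ℝ) (l k1 k2 : ℕ) :
    ∃ B : ℝ, 0 ≤ B ∧ ∀ (_ : l ≤ m) (_ : k1 + k2 ≤ l) (v : P2 → ℝ),
      ContDiffOn ℝ (⊤ : ℕ∞) v V →
      (∀ β ∈ idx2 m, Integrable
        (fun p => rho2 p ^ (2 * ((wt2 β : ℝ) - a)) * (D2 β v p) ^ 2 * p.1)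
        (volume.restrict V)) →
      Integrable (fun p => (D2 (k1, k2) (fun q => rho2 q ^ ((l : ℝ) - a) * v q) p) ^ 2 * p.1)
        (volume.restrict V) ∧
      (∫ p in V, (D2 (k1, k2) (fun q => rho2 q ^ ((l : ℝ) - a) * v q) p) ^ 2 * p.1)
        ≤ B * K2 V m a v := by
  obtain ⟨L, hLinv, hLeq⟩ := rep hVo hVr ((l : ℝ) - a) k1 k2
  set A := (L.map fun T => |T.c|).sum * M ^ m with hA
  refine ⟨A ^ 2 * (idx2 m).card, by positivity, ?_⟩
  intro hlm hkl v hv hint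
  set w := fun q => rho2 q ^ ((l : ℝ) - a) * v q with hwdef
  have hw : ContDiffOn ℝ (⊤ : ℕ∞) w V := smooth_w hVo hVr _ hv
  set GG := fun p => ∑ β ∈ idx2 m,
      rho2 p ^ (2 * ((wt2 β : ℝ) - a)) * (D2 β v p) ^ 2 * p.1 with hGGdef
  have hGG : Integrable GG (volume.restrict V) :=
    integrable_finset_sum _ (fun β hβ => hint β hβ)
  set B := A ^ 2 * ((idx2 m).card : ℝ) with hB
  have hpt : ∀ p ∈ V, (D2 (k1, k2) w p) ^ 2 * p.1 ≤ B * GG p := by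
    intro p hp
    have hρ := rho2_pos hVo hVr hp
    have hr0 : (0 : ℝ) ≤ p.1 := (mem_V_pos hVo hVr hp).le
    have h1 : (D2 (k1, k2) w p) ^ 2 ≤ (A * Sm m a v p) ^ 2 := by
      rw [← sq_abs (D2 (k1, k2) w p)]
      apply pow_le_pow_left₀ (abs_nonneg _)
      rw [hwdef, hLeq v hv p hp]
      exact evalL_bound hVo hVr hM1 hMV hlm hkl hLinv v hp
    have h2 : (Sm m a v p) ^ 2
        ≤ (idx2 m).card * ∑ β ∈ idx2 m, (rho2 p ^ ((wt2 β : ℝ) - a) * |D2 β v p|) ^ 2 :=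
      sq_sum_le_card_mul_sum_sq
    have h3 : ∀ β : ℕ × ℕ, (rho2 p ^ ((wt2 β : ℝ) - a) * |D2 β v p|) ^ 2
        = rho2 p ^ (2 * ((wt2 β : ℝ) - a)) * (D2 β v p) ^ 2 := by
      intro β
      rw [mul_pow, sq_abs]
      congr 1
      rw [sq, ← Real.rpow_add hρ]
      congr 1
      ring
    calc (D2 (k1, k2) w p) ^ 2 * p.1 ≤ (A * Sm m a v p) ^ 2 * p.1 := by gcongr
      _ = A ^ 2 * (Sm m a v p) ^ 2 * p.1 := by ring
      _ ≤ A ^ 2 * ((idx2 m).card * ∑ β ∈ idx2 m,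
            (rho2 p ^ ((wt2 β : ℝ) - a) * |D2 β v p|) ^ 2) * p.1 := by
          have hA2 : (0:ℝ) ≤ A ^ 2 := sq_nonneg _
          exact mul_le_mul_of_nonneg_right (mul_le_mul_of_nonneg_left h2 hA2) hr0
      _ = B * (∑ β ∈ idx2 m, (rho2 p ^ ((wt2 β : ℝ) - a) * |D2 β v p|) ^ 2 * p.1) := by
          rw [show A ^ 2 * (((idx2 m).card : ℝ) * ∑ β ∈ idx2 m,
              (rho2 p ^ ((wt2 β : ℝ) - a) * |D2 β v p|) ^ 2) * p.1
            = B * ((∑ β ∈ idx2 m, (rho2 p ^ ((wt2 β : ℝ) - a) * |D2 β v p|) ^ 2) * p.1) from by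
              rw [hB]; ring, Finset.sum_mul]
      _ = B * GG p := by
          congr 1
          refine Finset.sum_congr rfl fun β _ => ?_
          rw [h3 β]
  have hFc : ContinuousOn (fun p : P2 => (D2 (k1, k2) w p) ^ 2 * p.1) V :=
    (((smooth_D2 hVo hw (k1, k2)).continuousOn).pow 2).mul continuous_fst.continuousOn
  have hFm : AEStronglyMeasurable (fun p : P2 => (D2 (k1, k2) w p) ^ 2 * p.1) (volume.restrict V) := hFc.aestronglyMeasurable hVo.measurableSet
  have hBG : Integrable (fun p => B * GG p) (volume.restrict V) := hGG.const_mul _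
  have hae : ∀ᵐ p ∂(volume.restrict V), (D2 (k1, k2) w p) ^ 2 * p.1 ≤ B * GG p := by
    filter_upwards [ae_restrict_mem hVo.measurableSet] with p hp using hpt p hp
  have hFi : Integrable (fun p => (D2 (k1, k2) w p) ^ 2 * p.1) (volume.restrict V) := by
    refine hBG.mono' hFm ?_
    filter_upwards [ae_restrict_mem hVo.measurableSet] with p hp
    rw [Real.norm_eq_abs, abs_of_nonneg (mul_nonneg (sq_nonneg _) (mem_V_pos hVo hVr hp).le)]
    exact hpt p hp
  refine ⟨hFi, ?_⟩
  calc (∫ p in V, (D2 (k1, k2) w p) ^ 2 * p.1)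
      ≤ ∫ p in V, B * GG p := integral_mono_ae hFi hBG hae
    _ = B * K2 V m a v := by
        rw [integral_const_mul]
        congr 1
        rw [hGGdef, K2, integral_finset_sum _ (fun β hβ => hint β hβ)]

end INT

section FINAL

variable {V : Set P2}

lemma K2_nonneg (hVo : IsOpen V) (hVr : V ⊆ {p : P2 | 0 ≤ p.1}) (m : ℕ) (a : ℝ)
    (v : P2 → ℝ) : 0 ≤ K2 V m a v := by
  refine Finset.sum_nonneg fun β _ => integral_nonneg_of_ae ?_
  filter_upwards [ae_restrict_mem hVo.measurableSet] with p hp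
  have hr : (0 : ℝ) ≤ p.1 := hVr hp
  exact mul_nonneg (mul_nonneg (Real.rpow_nonneg (rho2_nonneg p) _) (sq_nonneg _)) hr

lemma idx2_wt_le {l : ℕ} {α : ℕ × ℕ} (h : α ∈ idx2 l) : α.1 + α.2 ≤ l := by
  simp only [idx2, Finset.mem_filter, wt2] at h
  exact (Finset.mem_filter.1 h).2

lemma per_l (hVo : IsOpen V) (hVr : V ⊆ {p : P2 | 0 ≤ p.1})
    {M : ℝ} (hM1 : 1 ≤ M) (hMV : ∀ p ∈ V, rho2 p ≤ M)
    (m : ℕ) (a : ℝ) (l : ℕ) :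
    ∃ C > 0, ∀ (_ : l ≤ m) (v : P2 → ℝ), ContDiffOn ℝ (⊤ : ℕ∞) v V →
      (∀ β ∈ idx2 m, Integrable
        (fun p => rho2 p ^ (2 * ((wt2 β : ℝ) - a)) * (D2 β v p) ^ 2 * p.1)
        (volume.restrict V)) →
      (∀ α ∈ idx2 l,
        Integrable (fun p => (D2 α (fun q => rho2 q ^ ((l : ℝ) - a) * v q) p) ^ 2 * p.1)
          (volume.restrict V)) ∧
      H21 V l (fun q => rho2 q ^ ((l : ℝ) - a) * v q) ≤ C * K2 V m a v := by
  choose B hB0 hB using fun α : ℕ × ℕ => per_alpha hVo hVr hM1 hMV m a l α.1 α.2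
  refine ⟨(∑ α ∈ idx2 l, B α) + 1, by
    have h0 : (0:ℝ) ≤ ∑ α ∈ idx2 l, B α := Finset.sum_nonneg fun α _ => hB0 α
    linarith, ?_⟩
  intro hlm v hv hint
  have hK0 : 0 ≤ K2 V m a v := K2_nonneg hVo hVr m a v
  constructor
  · intro α hα
    exact (hB α hlm (idx2_wt_le hα) v hv hint).1
  · have hsum : H21 V l (fun q => rho2 q ^ ((l : ℝ) - a) * v q)
        ≤ ∑ α ∈ idx2 l, B α * K2 V m a v := by
      refine Finset.sum_le_sum fun α hα => ?_
      exact (hB α hlm (idx2_wt_le hα) v hv hint).2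
    calc H21 V l (fun q => rho2 q ^ ((l : ℝ) - a) * v q)
        ≤ ∑ α ∈ idx2 l, B α * K2 V m a v := hsum
      _ = (∑ α ∈ idx2 l, B α) * K2 V m a v := (Finset.sum_mul _ _ _).symm
      _ ≤ ((∑ α ∈ idx2 l, B α) + 1) * K2 V m a v := by
          have h0 : (0:ℝ) ≤ ∑ α ∈ idx2 l, B α := Finset.sum_nonneg fun α _ => hB0 α
          nlinarith

lemma rho2_le_abs_add (p : P2) : rho2 p ≤ |p.1| + |p.2| := by
  rw [rho2]
  calc Real.sqrt (p.1 ^ 2 + p.2 ^ 2) ≤ Real.sqrt ((|p.1| + |p.2|) ^ 2) := by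
        apply Real.sqrt_le_sqrt
        have h1 : |p.1| ^ 2 = p.1 ^ 2 := sq_abs _
        have h2 : |p.2| ^ 2 = p.2 ^ 2 := sq_abs _
        nlinarith [abs_nonneg p.1, abs_nonneg p.2]
    _ = |p.1| + |p.2| := Real.sqrt_sq (by positivity)

end FINAL


/-- if ‖v‖²_{K^m_{a,1}(V)} < ∞ then for each 0 ≤ l ≤ m,
‖ρ^{-a+l} v‖²_{H^l_1(V)} ≤ C ‖v‖²_{K^m_{a,1}(V)}, C depending only on m, a, V. -/
theorem stmt_5 (V : Set P2) (hVo : IsOpen V) (hVb : Bornology.IsBounded V)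
    (hVr : V ⊆ {p : P2 | 0 ≤ p.1}) (h0 : ((0, 0) : P2) ∈ closure V)
    (m : ℕ) (a : ℝ) :
    ∃ C > 0, ∀ v : P2 → ℝ, ContDiffOn ℝ (⊤ : ℕ∞) v V →
      (∀ α ∈ idx2 m,
        Integrable (fun p => rho2 p ^ (2 * ((wt2 α : ℝ) - a)) * (D2 α v p) ^ 2 * p.1)
          (volume.restrict V)) →
      ∀ l ≤ m,
        (∀ α ∈ idx2 l,
          Integrable (fun p => (D2 α (fun q => rho2 q ^ ((l : ℝ) - a) * v q) p) ^ 2 * p.1)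
            (volume.restrict V)) ∧
        H21 V l (fun q => rho2 q ^ ((l : ℝ) - a) * v q) ≤ C * K2 V m a v := by
  
  obtain ⟨R, hR⟩ := hVb.exists_norm_le
  set M := 2 * |R| + 1 with hM
  have hM1 : (1 : ℝ) ≤ M := by
    have := abs_nonneg R
    rw [hM]; linarith
  have hMV : ∀ p ∈ V, rho2 p ≤ M := by
    intro p hp
    have h1 : |p.1| ≤ ‖p‖ := by
      rw [← Real.norm_eq_abs]; exact norm_fst_le p
    have h2 : |p.2| ≤ ‖p‖ := by
      rw [← Real.norm_eq_abs]; exact norm_snd_le p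
    have h3 : ‖p‖ ≤ R := hR p hp
    have h4 : R ≤ |R| := le_abs_self R
    calc rho2 p ≤ |p.1| + |p.2| := rho2_le_abs_add p
      _ ≤ M := by rw [hM]; linarith
  choose C hC0 hC using fun l : ℕ => per_l hVo hVr hM1 hMV m a l
  refine ⟨∑ l ∈ Finset.range (m + 1), C l, ?_, ?_⟩
  · exact Finset.sum_pos (fun l _ => hC0 l) ⟨0, Finset.mem_range.2 (Nat.succ_pos m)⟩
  · intro v hv hint l hlm
    obtain ⟨h1, h2⟩ := hC l hlm v hv hint
    refine ⟨h1, le_trans h2 ?_⟩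
    have hK0 : 0 ≤ K2 V m a v := K2_nonneg hVo hVr m a v
    have hCl : C l ≤ ∑ l ∈ Finset.range (m + 1), C l :=
      Finset.single_le_sum (fun i _ => (hC0 i).le) (Finset.mem_range.2 (by omega))
    exact mul_le_mul_of_nonneg_right hCl hK0
end
end

section
/- Let V ⊂ {(r,z) : r ≥ 0} ⊂ ℝ² be a bounded open set whose closure contains the origin and ρ(r,z) = √(r²+z²). For every integer m ≥ 0, real a, and every sufficiently smooth function v for which the right side is finite, ‖v‖²_{K^m_{a,1}(V)} := Σ_{|α| ≤ m} ∫_V ρ^{2(|α|-a)}(∂^α v)² r dr dz ≤ C Σ_{l ≤ m} |ρ^{-a+l} v|²_{H^l_1(V)}, where |w|²_{H^l_1(V)} = Σ_{|α| = l} ∫_V (∂^α w)² r dr dz and C depends only on m, a, and the diameter of V. -/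
set_option maxHeartbeats 1000000


open MeasureTheory

noncomputable section

/-- Multi-indices with |α| = l. -/
def idx2e (l : ℕ) : Finset (ℕ × ℕ) :=
  ((Finset.range (l+1)) ×ˢ (Finset.range (l+1))).filter fun α => wt2 α = l

/-- |w|²_{H^l_1(V)} = Σ_{|α|=l} ∫_V (∂^α w)² r dr dz. -/
def S21 (V : Set P2) (l : ℕ) (w : P2 → ℝ) : ℝ :=
  ∑ α ∈ idx2e l, ∫ p in V, (D2 α w p) ^ 2 * p.1

namespace Stmt6


abbrev M4 : Type := ℝ × ℝ × ℕ × ℕ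

def qf (p : P2) : ℝ := p.1 ^ 2 + p.2 ^ 2

lemma qf_nonneg (p : P2) : 0 ≤ qf p := by unfold qf; positivity

lemma qf_pos {p : P2} (h : 0 < p.1) : 0 < qf p := by
  have h1 : 0 < p.1 ^ 2 := by positivity
  have h2 := sq_nonneg p.2
  unfold qf; nlinarith

lemma rho2_eq (p : P2) : rho2 p = qf p ^ ((1:ℝ)/2) := by
  rw [rho2, Real.sqrt_eq_rpow]; rfl

lemma rho2_rpow (p : P2) (s : ℝ) : rho2 p ^ s = qf p ^ (s/2) := by
  rw [rho2_eq, ← Real.rpow_mul (qf_nonneg p)]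
  ring_nf

lemma rho2_nonneg (p : P2) : 0 ≤ rho2 p := Real.sqrt_nonneg _

lemma rho2_pos {p : P2} (h : 0 < p.1) : 0 < rho2 p := Real.sqrt_pos.2 (qf_pos h)

lemma abs_fst_le (p : P2) : |p.1| ≤ rho2 p := by
  rw [← Real.sqrt_sq_eq_abs]
  exact Real.sqrt_le_sqrt (by nlinarith [sq_nonneg p.2])

lemma abs_snd_le (p : P2) : |p.2| ≤ rho2 p := by
  rw [← Real.sqrt_sq_eq_abs]
  exact Real.sqrt_le_sqrt (by nlinarith [sq_nonneg p.1])

def mono (c u : ℝ) (i j : ℕ) : P2 → ℝ := fun p => c * qf p ^ u * p.1 ^ i * p.2 ^ j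

def F : List M4 → P2 → ℝ
  | [] => fun _ => 0
  | e :: L => fun p => mono e.1 e.2.1 e.2.2.1 e.2.2.2 p + F L p

def wL : List M4 → ℝ
  | [] => 0
  | e :: L => |e.1| + wL L

lemma wL_nonneg (L : List M4) : 0 ≤ wL L := by
  induction L with
  | nil => simp [wL]
  | cons e L ih => simp only [wL]; positivity

def OkL (s : ℝ) (L : List M4) : Prop :=
  ∀ e ∈ L, e.1 = 0 ∨ 2 * e.2.1 + (e.2.2.1 : ℝ) + (e.2.2.2 : ℝ) = s

lemma mono_abs_le {p : P2} (h : 0 < p.1) {c u : ℝ} {i j : ℕ} {s : ℝ}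
    (hd : c = 0 ∨ 2 * u + (i : ℝ) + (j : ℝ) = s) :
    |mono c u i j p| ≤ |c| * rho2 p ^ s := by
  rcases hd with hc | hd
  · have : mono c u i j p = 0 := by simp [mono, hc]
    rw [this, hc]
    simp
  · have hρ := rho2_pos h
    have e1 : |mono c u i j p| = |c| * qf p ^ u * p.1 ^ i * |p.2| ^ j := by
      simp [mono, abs_mul, abs_pow, abs_of_nonneg (Real.rpow_nonneg (qf_nonneg p) u),
        abs_of_pos h]
    have h1 : qf p ^ u = rho2 p ^ (2*u) := by rw [rho2_rpow]; norm_num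
    have h2 : p.1 ^ i ≤ rho2 p ^ (i:ℝ) := by
      rw [Real.rpow_natCast]
      exact pow_le_pow_left₀ h.le (le_trans (le_abs_self _) (abs_fst_le p)) i
    have h3 : |p.2| ^ j ≤ rho2 p ^ (j:ℝ) := by
      rw [Real.rpow_natCast]
      exact pow_le_pow_left₀ (abs_nonneg _) (abs_snd_le p) j
    rw [e1, h1]
    calc |c| * rho2 p ^ (2*u) * p.1 ^ i * |p.2| ^ j
        ≤ |c| * rho2 p ^ (2*u) * rho2 p ^ (i:ℝ) * rho2 p ^ (j:ℝ) := by
          have hp1 : (0:ℝ) ≤ p.1 ^ i := by positivity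
          have hr2 : (0:ℝ) ≤ rho2 p ^ (2*u) := by positivity
          have hri : (0:ℝ) ≤ rho2 p ^ (i:ℝ) := by positivity
          gcongr
      _ = |c| * rho2 p ^ s := by
          rw [mul_assoc, mul_assoc, ← Real.rpow_add hρ, ← Real.rpow_add hρ, ← hd]
          ring_nf

lemma F_abs_le {p : P2} (h : 0 < p.1) {s : ℝ} :
    ∀ {L : List M4}, OkL s L → |F L p| ≤ wL L * rho2 p ^ s := by
  intro L
  induction L with
  | nil => intro _; simp [F, wL]
  | cons e L ih =>
      intro hok
      have h1 := mono_abs_le h (hok e (List.mem_cons_self))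
      have h2 := ih (fun e' he' => hok e' (List.mem_cons_of_mem e he'))
      calc |F (e :: L) p| ≤ |mono e.1 e.2.1 e.2.2.1 e.2.2.2 p| + |F L p| := abs_add_le _ _
        _ ≤ |e.1| * rho2 p ^ s + wL L * rho2 p ^ s := add_le_add h1 h2
        _ = wL (e :: L) * rho2 p ^ s := by rw [wL]; ring


lemma hasFDerivAt_qf (p : P2) :
    HasFDerivAt qf (((2:ℝ)*p.1^(2-1)) • (ContinuousLinearMap.fst ℝ ℝ ℝ)
      + ((2:ℝ)*p.2^(2-1)) • (ContinuousLinearMap.snd ℝ ℝ ℝ)) p := by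
  have h1 := (hasDerivAt_pow 2 p.1).comp_hasFDerivAt (𝕜 := ℝ) p hasFDerivAt_fst
  have h2 := (hasDerivAt_pow 2 p.2).comp_hasFDerivAt (𝕜 := ℝ) p hasFDerivAt_snd
  have h := h1.add h2
  norm_num at h ⊢
  exact h

lemma mono_deriv {p : P2} (h : 0 < p.1) (c u : ℝ) (i j : ℕ) :
    DifferentiableAt ℝ (mono c u i j) p ∧
    pdr (mono c u i j) p = mono (2*c*u) (u-1) (i+1) j p + mono (c*i) u (i-1) j p ∧
    pdz (mono c u i j) p = mono (2*c*u) (u-1) i (j+1) p + mono (c*j) u i (j-1) p := by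
  have hq := hasFDerivAt_qf p
  have hqne : qf p ≠ 0 := (qf_pos h).ne'
  have h1 := hq.rpow_const (p := u) (Or.inl hqne)
  have h1c := h1.const_mul c
  have h2 := (hasDerivAt_pow i p.1).comp_hasFDerivAt (𝕜 := ℝ) p hasFDerivAt_fst
  have h3 := (hasDerivAt_pow j p.2).comp_hasFDerivAt (𝕜 := ℝ) p hasFDerivAt_snd
  have hm := (h1c.mul h2).mul h3
  have hm' : HasFDerivAt (mono c u i j) _ p := hm
  refine ⟨hm'.differentiableAt, ?_, ?_⟩
  · rw [pdr, hm'.fderiv]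
    simp [mono, ContinuousLinearMap.smul_apply, Function.comp]
    ring_nf
  · rw [pdz, hm'.fderiv]
    simp [mono, ContinuousLinearMap.smul_apply, Function.comp]
    ring_nf

lemma pdr_add {f g : P2 → ℝ} {p : P2} (hf : DifferentiableAt ℝ f p)
    (hg : DifferentiableAt ℝ g p) :
    pdr (fun q => f q + g q) p = pdr f p + pdr g p := by
  simp [pdr, fderiv_fun_add hf hg]

lemma pdz_add {f g : P2 → ℝ} {p : P2} (hf : DifferentiableAt ℝ f p)
    (hg : DifferentiableAt ℝ g p) :
    pdz (fun q => f q + g q) p = pdz f p + pdz g p := by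
  simp [pdz, fderiv_fun_add hf hg]

lemma pdr_mul {f g : P2 → ℝ} {p : P2} (hf : DifferentiableAt ℝ f p)
    (hg : DifferentiableAt ℝ g p) :
    pdr (fun q => f q * g q) p = pdr f p * g p + f p * pdr g p := by
  simp [pdr, fderiv_fun_mul hf hg]; ring

lemma pdz_mul {f g : P2 → ℝ} {p : P2} (hf : DifferentiableAt ℝ f p)
    (hg : DifferentiableAt ℝ g p) :
    pdz (fun q => f q * g q) p = pdz f p * g p + f p * pdz g p := by
  simp [pdz, fderiv_fun_mul hf hg]; ring

lemma pdr_congr {V : Set P2} (hV : IsOpen V) {f g : P2 → ℝ} (h : Set.EqOn f g V)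
    {p : P2} (hp : p ∈ V) : pdr f p = pdr g p := by
  have he : f =ᶠ[nhds p] g := Filter.eventuallyEq_of_mem (hV.mem_nhds hp) h
  rw [pdr, he.fderiv_eq]; rfl

lemma pdz_congr {V : Set P2} (hV : IsOpen V) {f g : P2 → ℝ} (h : Set.EqOn f g V)
    {p : P2} (hp : p ∈ V) : pdz f p = pdz g p := by
  have he : f =ᶠ[nhds p] g := Filter.eventuallyEq_of_mem (hV.mem_nhds hp) h
  rw [pdz, he.fderiv_eq]; rfl

lemma contDiffOn_pdr {V : Set P2} (hV : IsOpen V) {f : P2 → ℝ}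
    (hf : ContDiffOn ℝ (⊤ : ℕ∞) f V) : ContDiffOn ℝ (⊤ : ℕ∞) (pdr f) V := by
  have h := hf.fderiv_of_isOpen hV (m := (⊤ : ℕ∞)) (by exact_mod_cast le_top)
  exact h.clm_apply contDiffOn_const

lemma contDiffOn_pdz {V : Set P2} (hV : IsOpen V) {f : P2 → ℝ}
    (hf : ContDiffOn ℝ (⊤ : ℕ∞) f V) : ContDiffOn ℝ (⊤ : ℕ∞) (pdz f) V := by
  have h := hf.fderiv_of_isOpen hV (m := (⊤ : ℕ∞)) (by exact_mod_cast le_top)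
  exact h.clm_apply contDiffOn_const

lemma contDiffOn_D2 {V : Set P2} (hV : IsOpen V) {f : P2 → ℝ}
    (hf : ContDiffOn ℝ (⊤ : ℕ∞) f V) (α : ℕ × ℕ) :
    ContDiffOn ℝ (⊤ : ℕ∞) (D2 α f) V := by
  obtain ⟨i, j⟩ := α
  have hz : ContDiffOn ℝ (⊤ : ℕ∞) (pdz^[j] f) V := by
    induction j with
    | zero => exact hf
    | succ j ih => rw [Function.iterate_succ_apply']; exact contDiffOn_pdz hV ih
  show ContDiffOn ℝ (⊤ : ℕ∞) (pdr^[i] (pdz^[j] f)) V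
  induction i with
  | zero => exact hz
  | succ i ih => rw [Function.iterate_succ_apply']; exact contDiffOn_pdr hV ih

lemma D2_diffAt {V : Set P2} (hV : IsOpen V) {f : P2 → ℝ}
    (hf : ContDiffOn ℝ (⊤ : ℕ∞) f V) (α : ℕ × ℕ) {p : P2} (hp : p ∈ V) :
    DifferentiableAt ℝ (D2 α f) p := by
  have h := (contDiffOn_D2 hV hf α).contDiffAt (hV.mem_nhds hp)
  exact h.differentiableAt (by simp)

lemma D2_succ_r (i j : ℕ) (f : P2 → ℝ) : D2 (i+1, j) f = pdr (D2 (i, j) f) := by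
  show pdr^[i+1] (pdz^[j] f) = _
  rw [Function.iterate_succ_apply']
  rfl

lemma D2_succ_z (j : ℕ) (f : P2 → ℝ) : D2 (0, j+1) f = pdz (D2 (0, j) f) := by
  show pdr^[0] (pdz^[j+1] f) = _
  rw [Function.iterate_succ_apply']
  rfl

lemma D2_zero (f : P2 → ℝ) : D2 (0, 0) f = f := rfl

lemma D2_congr {V : Set P2} (hV : IsOpen V) {f g : P2 → ℝ} (h : Set.EqOn f g V)
    (α : ℕ × ℕ) : Set.EqOn (D2 α f) (D2 α g) V := by
  obtain ⟨i, j⟩ := α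
  have hz : Set.EqOn (pdz^[j] f) (pdz^[j] g) V := by
    induction j with
    | zero => exact h
    | succ j ih =>
        rw [Function.iterate_succ_apply', Function.iterate_succ_apply']
        exact fun p hp => pdz_congr hV ih hp
  show Set.EqOn (pdr^[i] (pdz^[j] f)) (pdr^[i] (pdz^[j] g)) V
  induction i with
  | zero => exact hz
  | succ i ih =>
      rw [Function.iterate_succ_apply', Function.iterate_succ_apply']
      exact fun p hp => pdr_congr hV ih hp

def stepr : List M4 → List M4
  | [] => []
  | (c, u, i, j) :: L => (2*c*u, u-1, i+1, j) :: (c*i, u, i-1, j) :: stepr L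

def stepz : List M4 → List M4
  | [] => []
  | (c, u, i, j) :: L => (2*c*u, u-1, i, j+1) :: (c*j, u, i, j-1) :: stepz L

lemma F_diffAt {p : P2} (h : 0 < p.1) (L : List M4) : DifferentiableAt ℝ (F L) p := by
  induction L with
  | nil => exact (differentiableAt_const 0)
  | cons e L ih =>
      have h1 := (mono_deriv h e.1 e.2.1 e.2.2.1 e.2.2.2).1
      exact h1.add ih

lemma pdr_F {p : P2} (h : 0 < p.1) (L : List M4) : pdr (F L) p = F (stepr L) p := by
  induction L with
  | nil =>
      show pdr (fun _ => (0:ℝ)) p = 0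
      simp [pdr]
  | cons e L ih =>
      obtain ⟨c, u, i, j⟩ := e
      have hd := mono_deriv h c u i j
      show pdr (fun q => mono c u i j q + F L q) p = _
      rw [pdr_add hd.1 (F_diffAt h L), hd.2.1, ih]
      show _ = mono (2*c*u) (u-1) (i+1) j p + (mono (c*i) u (i-1) j p + F (stepr L) p)
      ring

lemma pdz_F {p : P2} (h : 0 < p.1) (L : List M4) : pdz (F L) p = F (stepz L) p := by
  induction L with
  | nil =>
      show pdz (fun _ => (0:ℝ)) p = 0
      simp [pdz]
  | cons e L ih =>
      obtain ⟨c, u, i, j⟩ := e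
      have hd := mono_deriv h c u i j
      show pdz (fun q => mono c u i j q + F L q) p = _
      rw [pdz_add hd.1 (F_diffAt h L), hd.2.2, ih]
      show _ = mono (2*c*u) (u-1) i (j+1) p + (mono (c*j) u i (j-1) p + F (stepz L) p)
      ring

lemma OkL_stepr {s : ℝ} {L : List M4} (h : OkL s L) : OkL (s-1) (stepr L) := by
  induction L with
  | nil => intro e he; simp [stepr] at he
  | cons e L ih =>
      obtain ⟨c, u, i, j⟩ := e
      intro e' he'
      have hh := h (c, u, i, j) (List.mem_cons_self)
      have ht : OkL s L := fun x hx => h x (List.mem_cons_of_mem _ hx)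
      rw [stepr, List.mem_cons, List.mem_cons] at he'
      rcases he' with he' | he' | he'
      · subst he'
        rcases hh with h0 | h0
        · simp at h0; left; simp [h0]
        · right; push_cast; push_cast at h0; linarith
      · subst he'
        rcases hh with h0 | h0
        · simp at h0; left; simp [h0]
        · rcases Nat.eq_zero_or_pos i with hi | hi
          · left; simp [hi]
          · right
            show 2 * u + ((i - 1 : ℕ) : ℝ) + (j : ℝ) = s - 1
            rw [Nat.cast_sub hi]
            push_cast at h0 ⊢; linarith
      · exact ih ht e' he'

lemma OkL_stepz {s : ℝ} {L : List M4} (h : OkL s L) : OkL (s-1) (stepz L) := by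
  induction L with
  | nil => intro e he; simp [stepz] at he
  | cons e L ih =>
      obtain ⟨c, u, i, j⟩ := e
      intro e' he'
      have hh := h (c, u, i, j) (List.mem_cons_self)
      have ht : OkL s L := fun x hx => h x (List.mem_cons_of_mem _ hx)
      rw [stepz, List.mem_cons, List.mem_cons] at he'
      rcases he' with he' | he' | he'
      · subst he'
        rcases hh with h0 | h0
        · simp at h0; left; simp [h0]
        · right; push_cast; push_cast at h0; linarith
      · subst he'
        rcases hh with h0 | h0
        · simp at h0; left; simp [h0]
        · rcases Nat.eq_zero_or_pos j with hj | hj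
          · left; simp [hj]
          · right
            show 2 * u + (i : ℝ) + ((j - 1 : ℕ) : ℝ) = s - 1
            rw [Nat.cast_sub hj]
            push_cast at h0 ⊢; linarith
      · exact ih ht e' he'

def Fsum : List (List M4 × ℕ × ℕ) → (P2 → ℝ) → P2 → ℝ
  | [], _, _ => 0
  | e :: T, v, p => F e.1 p * D2 e.2 v p + Fsum T v p

def topL (s : ℝ) : List M4 := [(1, s/2, 0, 0)]

lemma F_topL (s : ℝ) (p : P2) : F (topL s) p = qf p ^ (s/2) := by
  simp [topL, F, mono]

lemma OkL_topL (s : ℝ) : OkL s (topL s) := by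
  intro e he
  simp only [topL, List.mem_singleton] at he
  subst he
  right
  show 2 * (s/2) + ((0:ℕ):ℝ) + ((0:ℕ):ℝ) = s
  push_cast; ring

def mapStepr : List (List M4 × ℕ × ℕ) → List (List M4 × ℕ × ℕ)
  | [] => []
  | (L, b) :: T => (stepr L, b) :: (L, b.1 + 1, b.2) :: mapStepr T

def mapStepz : List (List M4 × ℕ × ℕ) → List (List M4 × ℕ × ℕ)
  | [] => []
  | (L, b) :: T => (stepz L, b) :: (L, b.1, b.2 + 1) :: mapStepz T

lemma Fsum_diffAt {V : Set P2} (hV : IsOpen V) {v : P2 → ℝ}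
    (hv : ContDiffOn ℝ (⊤ : ℕ∞) v V) {p : P2} (hp : p ∈ V) (h1 : 0 < p.1)
    (T : List (List M4 × ℕ × ℕ)) : DifferentiableAt ℝ (Fsum T v) p := by
  induction T with
  | nil => exact differentiableAt_const (0:ℝ)
  | cons e T ih => exact ((F_diffAt h1 e.1).mul (D2_diffAt hV hv e.2 hp)).add ih

lemma pdr_Fsum {V : Set P2} (hV : IsOpen V) {v : P2 → ℝ}
    (hv : ContDiffOn ℝ (⊤ : ℕ∞) v V) {p : P2} (hp : p ∈ V) (h1 : 0 < p.1)
    (T : List (List M4 × ℕ × ℕ)) :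
    pdr (Fsum T v) p = Fsum (mapStepr T) v p := by
  induction T with
  | nil =>
      show pdr (fun _ => (0:ℝ)) p = 0
      simp [pdr]
  | cons e T ih =>
      obtain ⟨L, b⟩ := e
      have hF := F_diffAt h1 L
      have hD := D2_diffAt hV hv b hp
      have hrest := Fsum_diffAt hV hv hp h1 T
      show pdr (fun q => F L q * D2 b v q + Fsum T v q) p = _
      rw [pdr_add (f := fun q => F L q * D2 b v q) (hF.mul hD) hrest, pdr_mul hF hD, pdr_F h1, ih]
      have hb : pdr (D2 b v) p = D2 (b.1 + 1, b.2) v p := by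
        rw [D2_succ_r b.1 b.2 v]
      rw [hb]
      show _ = F (stepr L) p * D2 b v p + (F L p * D2 (b.1 + 1, b.2) v p + Fsum (mapStepr T) v p)
      ring

lemma pdz_Fsum {V : Set P2} (hV : IsOpen V) {v : P2 → ℝ}
    (hv : ContDiffOn ℝ (⊤ : ℕ∞) v V) {p : P2} (hp : p ∈ V) (h1 : 0 < p.1)
    (T : List (List M4 × ℕ × ℕ)) (h0 : ∀ e ∈ T, e.2.1 = 0) :
    pdz (Fsum T v) p = Fsum (mapStepz T) v p := by
  induction T with
  | nil =>
      show pdz (fun _ => (0:ℝ)) p = 0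
      simp [pdz]
  | cons e T ih =>
      obtain ⟨L, b⟩ := e
      have hb1 : b.1 = 0 := h0 (L, b) (List.mem_cons_self)
      have hF := F_diffAt h1 L
      have hD := D2_diffAt hV hv b hp
      have hrest := Fsum_diffAt hV hv hp h1 T
      show pdz (fun q => F L q * D2 b v q + Fsum T v q) p = _
      rw [pdz_add (f := fun q => F L q * D2 b v q) (hF.mul hD) hrest, pdz_mul hF hD, pdz_F h1,
        ih (fun e he => h0 e (List.mem_cons_of_mem _ he))]
      have hb : pdz (D2 b v) p = D2 (b.1, b.2 + 1) v p := by
        obtain ⟨b1, b2⟩ := b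
        simp only at hb1
        subst hb1
        rw [D2_succ_z b2 v]
      rw [hb]
      show _ = F (stepz L) p * D2 b v p + (F L p * D2 (b.1, b.2 + 1) v p + Fsum (mapStepz T) v p)
      ring

lemma mapStepr_prop (d : ℝ) (k : ℕ) :
    ∀ {T : List (List M4 × ℕ × ℕ)},
      (∀ e ∈ T, e.2.1 + e.2.2 < k ∧ OkL (d + ((e.2.1 : ℝ) + (e.2.2 : ℝ))) e.1) →
      ∀ e ∈ mapStepr T, e.2.1 + e.2.2 < k + 1 ∧ OkL ((d-1) + ((e.2.1 : ℝ) + (e.2.2 : ℝ))) e.1 := by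
  intro T
  induction T with
  | nil => intro _ e he; simp [mapStepr] at he
  | cons e T ih =>
      obtain ⟨L, b⟩ := e
      intro h e' he'
      have hhd := h (L, b) (List.mem_cons_self)
      have ht := fun x hx => h x (List.mem_cons_of_mem _ hx)
      rw [mapStepr, List.mem_cons, List.mem_cons] at he'
      rcases he' with he' | he' | he'
      · subst he'
        have hw : b.1 + b.2 < k := hhd.1
        refine ⟨by show b.1 + b.2 < k + 1; omega, ?_⟩
        show OkL ((d-1) + ((b.1 : ℝ) + (b.2 : ℝ))) (stepr L)
        rw [show (d - 1) + ((b.1 : ℝ) + (b.2 : ℝ)) = (d + ((b.1 : ℝ) + (b.2 : ℝ))) - 1 by ring]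
        exact OkL_stepr hhd.2
      · subst he'
        have hw : b.1 + b.2 < k := hhd.1
        refine ⟨by show b.1 + 1 + b.2 < k + 1; omega, ?_⟩
        show OkL ((d-1) + (((b.1 + 1 : ℕ) : ℝ) + (b.2 : ℝ))) L
        rw [show (d - 1) + (((b.1 + 1 : ℕ) : ℝ) + (b.2 : ℝ)) = d + ((b.1 : ℝ) + (b.2 : ℝ)) by push_cast; ring]
        exact hhd.2
      · exact ih ht e' he'

lemma mapStepz_prop (d : ℝ) (k : ℕ) :
    ∀ {T : List (List M4 × ℕ × ℕ)},
      (∀ e ∈ T, e.2.1 = 0 ∧ e.2.1 + e.2.2 < k ∧ OkL (d + ((e.2.1 : ℝ) + (e.2.2 : ℝ))) e.1) →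
      ∀ e ∈ mapStepz T, e.2.1 = 0 ∧ e.2.1 + e.2.2 < k + 1 ∧ OkL ((d-1) + ((e.2.1 : ℝ) + (e.2.2 : ℝ))) e.1 := by
  intro T
  induction T with
  | nil => intro _ e he; simp [mapStepz] at he
  | cons e T ih =>
      obtain ⟨L, b⟩ := e
      intro h e' he'
      have hhd := h (L, b) (List.mem_cons_self)
      have ht := fun x hx => h x (List.mem_cons_of_mem _ hx)
      rw [mapStepz, List.mem_cons, List.mem_cons] at he'
      rcases he' with he' | he' | he'
      · subst he'
        have hw : b.1 + b.2 < k := hhd.2.1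
        refine ⟨hhd.1, by show b.1 + b.2 < k + 1; omega, ?_⟩
        show OkL ((d-1) + ((b.1 : ℝ) + (b.2 : ℝ))) (stepz L)
        rw [show (d - 1) + ((b.1 : ℝ) + (b.2 : ℝ)) = (d + ((b.1 : ℝ) + (b.2 : ℝ))) - 1 by ring]
        exact OkL_stepz hhd.2.2
      · subst he'
        have hw : b.1 + b.2 < k := hhd.2.1
        refine ⟨hhd.1, by show b.1 + (b.2 + 1) < k + 1; omega, ?_⟩
        show OkL ((d-1) + ((b.1 : ℝ) + ((b.2 + 1 : ℕ) : ℝ))) L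
        rw [show (d - 1) + ((b.1 : ℝ) + ((b.2 + 1 : ℕ) : ℝ)) = d + ((b.1 : ℝ) + (b.2 : ℝ)) by push_cast; ring]
        exact hhd.2.2
      · exact ih ht e' he'

lemma repr0 {V : Set P2} (hVo : IsOpen V) (hVr : ∀ p ∈ V, 0 < p.1) (s : ℝ) (j : ℕ) :
    ∃ T : List (List M4 × ℕ × ℕ),
      (∀ e ∈ T, e.2.1 = 0 ∧ e.2.1 + e.2.2 < 0 + j ∧
        OkL ((s - ((0:ℕ) + j : ℕ)) + ((e.2.1 : ℝ) + (e.2.2 : ℝ))) e.1) ∧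
      ∀ v : P2 → ℝ, ContDiffOn ℝ (⊤ : ℕ∞) v V → ∀ p ∈ V,
        D2 (0, j) (fun q => qf q ^ (s/2) * v q) p
          = qf p ^ (s/2) * D2 (0, j) v p + Fsum T v p := by
  induction j with
  | zero =>
      refine ⟨[], by simp, ?_⟩
      intro v hv p hp
      show qf p ^ (s/2) * v p = qf p ^ (s/2) * v p + 0
      ring
  | succ j ih =>
      obtain ⟨T, hT, hid⟩ := ih
      refine ⟨(stepz (topL s), 0, j) :: mapStepz T, ?_, ?_⟩
      · intro e he
        rcases List.mem_cons.1 he with he | he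
        · subst he
          refine ⟨rfl, by show 0 + j < 0 + (j+1); omega, ?_⟩
          show OkL ((s - ((0:ℕ) + (j+1) : ℕ)) + (((0:ℕ) : ℝ) + (j : ℝ))) (stepz (topL s))
          rw [show (s - ((0:ℕ) + (j+1) : ℕ)) + (((0:ℕ) : ℝ) + (j : ℝ)) = s - 1 by push_cast; ring]
          exact OkL_stepz (OkL_topL s)
        · have hT' : ∀ e ∈ T, e.2.1 = 0 ∧ e.2.1 + e.2.2 < j ∧
              OkL ((s - ((0:ℕ) + j : ℕ)) + ((e.2.1 : ℝ) + (e.2.2 : ℝ))) e.1 := by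
            intro x hx
            have := hT x hx
            exact ⟨this.1, by omega, this.2.2⟩
          have := mapStepz_prop (s - ((0:ℕ) + j : ℕ)) j hT' e he
          refine ⟨this.1, by omega, ?_⟩
          rw [show (s - ((0:ℕ) + (j+1) : ℕ)) + ((e.2.1 : ℝ) + (e.2.2 : ℝ))
            = (s - ((0:ℕ) + j : ℕ) - 1) + ((e.2.1 : ℝ) + (e.2.2 : ℝ)) by push_cast; ring]
          exact this.2.2
      · intro v hv p hp
        have hp1 := hVr p hp
        have hDz : DifferentiableAt ℝ (D2 (0, j) v) p := D2_diffAt hVo hv _ hp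
        have hFt : DifferentiableAt ℝ (F (topL s)) p := F_diffAt hp1 _
        have hFs : DifferentiableAt ℝ (Fsum T v) p := Fsum_diffAt hVo hv hp hp1 T
        have e0 : D2 (0, j+1) (fun q => qf q ^ (s/2) * v q) p
            = pdz (D2 (0, j) (fun q => qf q ^ (s/2) * v q)) p := by
          rw [D2_succ_z]
        rw [e0]
        have ecg : pdz (D2 (0, j) (fun q => qf q ^ (s/2) * v q)) p
            = pdz (fun q => F (topL s) q * D2 (0, j) v q + Fsum T v q) p := by
          apply pdz_congr hVo (fun q hq => ?_) hp
          rw [hid v hv q hq, F_topL]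
        rw [ecg, pdz_add (f := fun q => F (topL s) q * D2 (0, j) v q) (hFt.mul hDz) hFs, pdz_mul hFt hDz, pdz_F hp1,
          pdz_Fsum hVo hv hp hp1 T (fun e he => (hT e he).1)]
        have hb : pdz (D2 (0, j) v) p = D2 (0, j+1) v p := by rw [D2_succ_z]
        rw [hb, F_topL]
        show _ = qf p ^ (s/2) * D2 (0, j+1) v p
          + (F (stepz (topL s)) p * D2 (0, j) v p + Fsum (mapStepz T) v p)
        ring

lemma repr_lemma {V : Set P2} (hVo : IsOpen V) (hVr : ∀ p ∈ V, 0 < p.1) (s : ℝ) (i j : ℕ) :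
    ∃ T : List (List M4 × ℕ × ℕ),
      (∀ e ∈ T, e.2.1 + e.2.2 < i + j ∧
        OkL ((s - (i + j : ℕ)) + ((e.2.1 : ℝ) + (e.2.2 : ℝ))) e.1) ∧
      ∀ v : P2 → ℝ, ContDiffOn ℝ (⊤ : ℕ∞) v V → ∀ p ∈ V,
        D2 (i, j) (fun q => qf q ^ (s/2) * v q) p
          = qf p ^ (s/2) * D2 (i, j) v p + Fsum T v p := by
  induction i with
  | zero =>
      obtain ⟨T, hT, hid⟩ := repr0 hVo hVr s j
      exact ⟨T, fun e he => ⟨(hT e he).2.1, (hT e he).2.2⟩, hid⟩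
  | succ i ih =>
      obtain ⟨T, hT, hid⟩ := ih
      refine ⟨(stepr (topL s), i, j) :: mapStepr T, ?_, ?_⟩
      · intro e he
        rcases List.mem_cons.1 he with he | he
        · subst he
          refine ⟨by show i + j < (i+1) + j; omega, ?_⟩
          show OkL ((s - ((i+1) + j : ℕ)) + (((i:ℕ) : ℝ) + (j : ℝ))) (stepr (topL s))
          rw [show (s - ((i+1) + j : ℕ)) + (((i:ℕ) : ℝ) + (j : ℝ)) = s - 1 by push_cast; ring]
          exact OkL_stepr (OkL_topL s)
        · have := mapStepr_prop (s - (i + j : ℕ)) (i + j)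
            (fun x hx => ⟨(hT x hx).1, (hT x hx).2⟩) e he
          refine ⟨by omega, ?_⟩
          rw [show (s - ((i+1) + j : ℕ)) + ((e.2.1 : ℝ) + (e.2.2 : ℝ))
            = (s - (i + j : ℕ) - 1) + ((e.2.1 : ℝ) + (e.2.2 : ℝ)) by push_cast; ring]
          exact this.2
      · intro v hv p hp
        have hp1 := hVr p hp
        have hDr : DifferentiableAt ℝ (D2 (i, j) v) p := D2_diffAt hVo hv _ hp
        have hFt : DifferentiableAt ℝ (F (topL s)) p := F_diffAt hp1 _
        have hFs : DifferentiableAt ℝ (Fsum T v) p := Fsum_diffAt hVo hv hp hp1 T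
        have e0 : D2 (i+1, j) (fun q => qf q ^ (s/2) * v q) p
            = pdr (D2 (i, j) (fun q => qf q ^ (s/2) * v q)) p := by
          rw [D2_succ_r]
        rw [e0]
        have ecg : pdr (D2 (i, j) (fun q => qf q ^ (s/2) * v q)) p
            = pdr (fun q => F (topL s) q * D2 (i, j) v q + Fsum T v q) p := by
          apply pdr_congr hVo (fun q hq => ?_) hp
          rw [hid v hv q hq, F_topL]
        rw [ecg, pdr_add (f := fun q => F (topL s) q * D2 (i, j) v q) (hFt.mul hDr) hFs, pdr_mul hFt hDr, pdr_F hp1,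
          pdr_Fsum hVo hv hp hp1 T]
        have hb : pdr (D2 (i, j) v) p = D2 (i+1, j) v p := by rw [D2_succ_r]
        rw [hb, F_topL]
        show _ = qf p ^ (s/2) * D2 (i+1, j) v p
          + (F (stepr (topL s)) p * D2 (i, j) v p + Fsum (mapStepr T) v p)
        ring

def wfun (a : ℝ) (l : ℕ) (v : P2 → ℝ) : P2 → ℝ := fun q => rho2 q ^ ((l : ℝ) - a) * v q

def SS (m : ℕ) : Finset ((_ : ℕ) × (ℕ × ℕ)) := (Finset.range (m+1)).sigma (fun l => idx2e l)

def W (m : ℕ) (a : ℝ) (v : P2 → ℝ) (p : P2) : ℝ :=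
  ∑ x ∈ SS m, |D2 x.2 (wfun a x.1 v) p|

lemma W_nonneg (m : ℕ) (a : ℝ) (v : P2 → ℝ) (p : P2) : 0 ≤ W m a v p :=
  Finset.sum_nonneg fun _ _ => abs_nonneg _

lemma mem_idx2e {k : ℕ} {β : ℕ × ℕ} (h : β.1 + β.2 = k) : β ∈ idx2e k := by
  refine Finset.mem_filter.2 ⟨Finset.mem_product.2 ⟨?_, ?_⟩, h⟩
  · exact Finset.mem_range.2 (by omega)
  · exact Finset.mem_range.2 (by omega)

lemma term_le_W {m k : ℕ} (a : ℝ) {β : ℕ × ℕ} (hk : k ≤ m) (hβ : β ∈ idx2e k)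
    (v : P2 → ℝ) (p : P2) : |D2 β (wfun a k v) p| ≤ W m a v p := by
  have hmem : (⟨k, β⟩ : (_ : ℕ) × (ℕ × ℕ)) ∈ SS m :=
    Finset.mem_sigma.2 ⟨Finset.mem_range.2 (show k < m + 1 by omega), hβ⟩
  exact Finset.single_le_sum
    (f := fun x : (_ : ℕ) × (ℕ × ℕ) => |D2 x.2 (wfun a x.1 v) p|)
    (fun x _ => abs_nonneg _) hmem

lemma master {V : Set P2} (hVo : IsOpen V) (hVr : ∀ p ∈ V, 0 < p.1) (m : ℕ) (a : ℝ) :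
    ∀ k : ℕ, k ≤ m → ∀ i j : ℕ, i + j = k →
      ∃ C : ℝ, 0 < C ∧ ∀ v : P2 → ℝ, ContDiffOn ℝ (⊤ : ℕ∞) v V → ∀ p ∈ V,
        rho2 p ^ ((k : ℝ) - a) * |D2 (i, j) v p| ≤ C * W m a v p := by
  intro k
  induction k using Nat.strong_induction_on with
  | _ k IH =>
    intro hk i j hij
    obtain ⟨T, hT, hid⟩ := repr_lemma hVo hVr ((k : ℝ) - a) i j
    have tail : ∀ T' : List (List M4 × ℕ × ℕ),
        (∀ e ∈ T', e.2.1 + e.2.2 < i + j ∧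
          OkL ((((k:ℝ) - a) - ((i + j : ℕ) : ℝ)) + ((e.2.1 : ℝ) + (e.2.2 : ℝ))) e.1) →
        ∃ C : ℝ, 0 ≤ C ∧ ∀ v : P2 → ℝ, ContDiffOn ℝ (⊤ : ℕ∞) v V → ∀ p ∈ V,
          |Fsum T' v p| ≤ C * W m a v p := by
      intro T'
      induction T' with
      | nil =>
          exact fun _ => ⟨0, le_refl 0, fun v hv p hp => by
            show |(0:ℝ)| ≤ 0 * W m a v p
            simp⟩
      | cons e T' ih =>
          intro hA
          obtain ⟨C1, hC1, h1⟩ := ih (fun x hx => hA x (List.mem_cons_of_mem _ hx))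
          have he := hA e (List.mem_cons_self)
          have hwe : e.2.1 + e.2.2 < k := by omega
          obtain ⟨C2, hC2, h2⟩ := IH (e.2.1 + e.2.2) hwe (by omega) e.2.1 e.2.2 rfl
          refine ⟨wL e.1 * C2 + C1, add_nonneg (mul_nonneg (wL_nonneg e.1) hC2.le) hC1, ?_⟩
          intro v hv p hp
          have hp1 := hVr p hp
          have hok : OkL (((e.2.1 + e.2.2 : ℕ) : ℝ) - a) e.1 := by
            have heq : (((k:ℝ) - a) - ((i + j : ℕ) : ℝ)) + ((e.2.1 : ℝ) + (e.2.2 : ℝ))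
                = ((e.2.1 + e.2.2 : ℕ) : ℝ) - a := by
              have : ((i : ℝ) + (j : ℝ)) = (k : ℝ) := by exact_mod_cast hij
              push_cast
              linarith
            rw [← heq]
            exact he.2
          have hF := F_abs_le hp1 hok
          have h2' := h2 v hv p hp
          have h2p : h2' = h2' := rfl
          have hterm : |F e.1 p * D2 e.2 v p| ≤ wL e.1 * (C2 * W m a v p) := by
            rw [abs_mul]
            calc |F e.1 p| * |D2 e.2 v p|
                ≤ (wL e.1 * rho2 p ^ (((e.2.1 + e.2.2 : ℕ) : ℝ) - a)) * |D2 e.2 v p| :=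
                  mul_le_mul_of_nonneg_right hF (abs_nonneg _)
              _ = wL e.1 * (rho2 p ^ (((e.2.1 + e.2.2 : ℕ) : ℝ) - a) * |D2 e.2 v p|) := by ring
              _ ≤ wL e.1 * (C2 * W m a v p) := by
                  apply mul_le_mul_of_nonneg_left _ (wL_nonneg e.1)
                  exact h2'
          calc |Fsum (e :: T') v p|
              ≤ |F e.1 p * D2 e.2 v p| + |Fsum T' v p| := abs_add_le _ _
            _ ≤ wL e.1 * (C2 * W m a v p) + C1 * W m a v p :=
                add_le_add hterm (h1 v hv p hp)
            _ = (wL e.1 * C2 + C1) * W m a v p := by ring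
    obtain ⟨CT, hCT0, hCT⟩ := tail T hT
    refine ⟨CT + 1, by positivity, ?_⟩
    intro v hv p hp
    have hp1 := hVr p hp
    have hidp := hid v hv p hp
    have hwf : (fun q => qf q ^ (((k:ℝ) - a)/2) * v q) = wfun a k v := by
      funext q
      rw [wfun, rho2_rpow]
    rw [hwf] at hidp
    have hq : rho2 p ^ ((k:ℝ) - a) = qf p ^ (((k:ℝ) - a)/2) := rho2_rpow p _
    have hβ : (i, j) ∈ idx2e k := mem_idx2e (by simpa using hij)
    calc rho2 p ^ ((k:ℝ) - a) * |D2 (i, j) v p|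
        = |rho2 p ^ ((k:ℝ) - a) * D2 (i, j) v p| := by
          rw [abs_mul, abs_of_nonneg (Real.rpow_nonneg (rho2_nonneg p) _)]
      _ = |D2 (i, j) (wfun a k v) p - Fsum T v p| := by
          rw [hq]
          congr 1
          linarith [hidp]
      _ ≤ |D2 (i, j) (wfun a k v) p| + |Fsum T v p| := abs_sub _ _
      _ ≤ W m a v p + CT * W m a v p :=
          add_le_add (term_le_W a hk hβ v p) (hCT v hv p hp)
      _ = (CT + 1) * W m a v p := by ring

lemma master_uniform {V : Set P2} (hVo : IsOpen V) (hVr : ∀ p ∈ V, 0 < p.1)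
    (m : ℕ) (a : ℝ) :
    ∃ C : ℝ, 0 < C ∧ ∀ α ∈ idx2 m, ∀ v : P2 → ℝ, ContDiffOn ℝ (⊤ : ℕ∞) v V →
      ∀ p ∈ V, rho2 p ^ ((wt2 α : ℝ) - a) * |D2 α v p| ≤ C * W m a v p := by
  have h : ∀ α : ℕ × ℕ, ∃ C : ℝ, 0 < C ∧ (wt2 α ≤ m →
      ∀ v : P2 → ℝ, ContDiffOn ℝ (⊤ : ℕ∞) v V → ∀ p ∈ V,
        rho2 p ^ ((wt2 α : ℝ) - a) * |D2 α v p| ≤ C * W m a v p) := by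
    intro α
    by_cases hα : wt2 α ≤ m
    · obtain ⟨C, hC, hb⟩ := master hVo hVr m a (wt2 α) hα α.1 α.2 rfl
      exact ⟨C, hC, fun _ => hb⟩
    · exact ⟨1, one_pos, fun h' => absurd h' hα⟩
  choose f hf using h
  have h00 : ((0,0) : ℕ × ℕ) ∈ idx2 m := by
    refine Finset.mem_filter.2 ⟨Finset.mem_product.2 ⟨?_, ?_⟩, by simp [wt2]⟩
    · exact Finset.mem_range.2 (by omega)
    · exact Finset.mem_range.2 (by omega)
  refine ⟨∑ α ∈ idx2 m, f α, Finset.sum_pos (fun α _ => (hf α).1) ⟨(0,0), h00⟩, ?_⟩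
  intro α hα v hv p hp
  have h1 := (hf α).2 (Finset.mem_filter.1 hα).2 v hv p hp
  have h2 : f α ≤ ∑ β ∈ idx2 m, f β :=
    Finset.single_le_sum (fun β _ => (hf β).1.le) hα
  exact h1.trans (mul_le_mul_of_nonneg_right h2 (W_nonneg m a v p))

end Stmt6

/-- ‖v‖²_{K^m_{a,1}(V)} ≤ C Σ_{l≤m} |ρ^{-a+l} v|²_{H^l_1(V)},
C depending only on m, a, V. -/
theorem stmt_6 (V : Set P2) (hVo : IsOpen V) (hVb : Bornology.IsBounded V)
    (hVr : V ⊆ {p : P2 | 0 ≤ p.1}) (h0 : ((0, 0) : P2) ∈ closure V)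
    (m : ℕ) (a : ℝ) :
    ∃ C > 0, ∀ v : P2 → ℝ, ContDiffOn ℝ (⊤ : ℕ∞) v V →
      (∀ l ≤ m, ∀ α ∈ idx2e l,
        Integrable (fun p => (D2 α (fun q => rho2 q ^ ((l : ℝ) - a) * v q) p) ^ 2 * p.1)
          (volume.restrict V)) →
      K2 V m a v
        ≤ C * ∑ l ∈ Finset.range (m+1),
            S21 V l (fun q => rho2 q ^ ((l : ℝ) - a) * v q) := by
  classical
  have hVpos : ∀ p ∈ V, 0 < p.1 := by
    intro p hp
    have h0p : (0:ℝ) ≤ p.1 := hVr hp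
    rcases lt_or_eq_of_le h0p with h | h
    · exact h
    · exfalso
      obtain ⟨ε, hε, hball⟩ := Metric.isOpen_iff.1 hVo p hp
      have hd : dist ((p.1 - ε/2, p.2) : P2) p < ε := by
        rw [Prod.dist_eq]
        have h1 : dist (p.1 - ε/2) p.1 = ε/2 := by
          rw [Real.dist_eq]
          rw [show p.1 - ε/2 - p.1 = -(ε/2) by ring, abs_neg, abs_of_pos (by linarith)]
        have h2 : dist p.2 p.2 = 0 := dist_self _
        show max (dist (p.1 - ε/2) p.1) (dist p.2 p.2) < ε
        rw [h1, h2]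
        apply max_lt (by linarith) hε
      have hq := hVr (hball (Metric.mem_ball.2 hd))
      simp only [Set.mem_setOf_eq] at hq
      linarith
  obtain ⟨C0, hC0, hbound⟩ := Stmt6.master_uniform hVo hVpos m a
  set N : ℝ := ((Stmt6.SS m).card : ℝ) with hN
  have h00 : ((0,0) : ℕ × ℕ) ∈ idx2 m :=
    Finset.mem_filter.2 ⟨Finset.mem_product.2
      ⟨Finset.mem_range.2 (by omega), Finset.mem_range.2 (by omega)⟩, by simp [wt2]⟩
  have hS0 : (⟨0, (0,0)⟩ : (_ : ℕ) × (ℕ × ℕ)) ∈ Stmt6.SS m := by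
    refine Finset.mem_sigma.2 ⟨Finset.mem_range.2 ?_, Stmt6.mem_idx2e rfl⟩
    show 0 < m + 1
    omega
  have hNpos : 0 < N := by
    rw [hN]; exact_mod_cast Finset.card_pos.2 ⟨_, hS0⟩
  have hMpos : 0 < ((idx2 m).card : ℝ) := by
    exact_mod_cast Finset.card_pos.2 ⟨_, h00⟩
  refine ⟨((idx2 m).card : ℝ) * C0^2 * N,
    mul_pos (mul_pos hMpos (pow_pos hC0 2)) hNpos, ?_⟩
  intro v hv hInt
  set RHS := ∑ l ∈ Finset.range (m+1), S21 V l (fun q => rho2 q ^ ((l : ℝ) - a) * v q)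
    with hRHS
  have hIx : ∀ x ∈ Stmt6.SS m,
      Integrable (fun p => (D2 x.2 (Stmt6.wfun a x.1 v) p)^2 * p.1) (volume.restrict V) := by
    intro x hx
    have hx' := Finset.mem_sigma.1 hx
    exact hInt x.1 (Nat.lt_succ_iff.1 (Finset.mem_range.1 hx'.1)) x.2 hx'.2
  have hg : Integrable
      (fun p => C0^2 * N * ∑ x ∈ Stmt6.SS m, (D2 x.2 (Stmt6.wfun a x.1 v) p)^2 * p.1)
      (volume.restrict V) :=
    (integrable_finset_sum _ hIx).const_mul _
  have hWsq : ∀ p : P2, (Stmt6.W m a v p)^2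
      ≤ N * ∑ x ∈ Stmt6.SS m, (D2 x.2 (Stmt6.wfun a x.1 v) p)^2 := by
    intro p
    have hcs := Finset.sum_mul_sq_le_sq_mul_sq (Stmt6.SS m) (fun _ => (1:ℝ))
      (fun x => |D2 x.2 (Stmt6.wfun a x.1 v) p|)
    simp only [one_mul, one_pow, sq_abs] at hcs
    calc (Stmt6.W m a v p)^2
        = (∑ x ∈ Stmt6.SS m, |D2 x.2 (Stmt6.wfun a x.1 v) p|)^2 := rfl
      _ ≤ (∑ _x ∈ Stmt6.SS m, (1:ℝ)) * ∑ x ∈ Stmt6.SS m, (D2 x.2 (Stmt6.wfun a x.1 v) p)^2 :=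
          hcs
      _ = N * ∑ x ∈ Stmt6.SS m, (D2 x.2 (Stmt6.wfun a x.1 v) p)^2 := by
          rw [Finset.sum_const, nsmul_eq_mul, mul_one]
  have hcontrho : Continuous rho2 := by
    unfold rho2
    continuity
  have hper : ∀ α ∈ idx2 m,
      (∫ p in V, rho2 p ^ (2*((wt2 α : ℝ) - a)) * (D2 α v p)^2 * p.1)
        ≤ C0^2 * N * RHS := by
    intro α hα
    set fα := fun p : P2 => rho2 p ^ (2*((wt2 α : ℝ) - a)) * (D2 α v p)^2 * p.1 with hfα
    set g := fun p : P2 => C0^2 * N * ∑ x ∈ Stmt6.SS m, (D2 x.2 (Stmt6.wfun a x.1 v) p)^2 * p.1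
      with hgdef
    have hfg : ∀ p ∈ V, fα p ≤ g p := by
      intro p hp
      have hb := hbound α hα v hv p hp
      have hp1 := (hVpos p hp).le
      have hX0 : 0 ≤ rho2 p ^ ((wt2 α : ℝ) - a) * |D2 α v p| :=
        mul_nonneg (Real.rpow_nonneg (Stmt6.rho2_nonneg p) _) (abs_nonneg _)
      have hsq := mul_self_le_mul_self hX0 hb
      have hrw : rho2 p ^ (2*((wt2 α : ℝ) - a)) * (D2 α v p)^2
          = (rho2 p ^ ((wt2 α : ℝ) - a) * |D2 α v p|)
            * (rho2 p ^ ((wt2 α : ℝ) - a) * |D2 α v p|) := by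
        have h1 : rho2 p ^ (2*((wt2 α : ℝ) - a))
            = rho2 p ^ ((wt2 α : ℝ) - a) * rho2 p ^ ((wt2 α : ℝ) - a) := by
          rw [← Real.rpow_add (Stmt6.rho2_pos (hVpos p hp))]
          congr 1; ring
        have h2 : (D2 α v p)^2 = |D2 α v p| * |D2 α v p| := by
          rw [abs_mul_abs_self, sq]
        rw [h1, h2]; ring
      have hcs := hWsq p
      have hW0 := Stmt6.W_nonneg m a v p
      calc fα p = rho2 p ^ (2*((wt2 α : ℝ) - a)) * (D2 α v p)^2 * p.1 := rfl
        _ = ((rho2 p ^ ((wt2 α : ℝ) - a) * |D2 α v p|)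
            * (rho2 p ^ ((wt2 α : ℝ) - a) * |D2 α v p|)) * p.1 := by rw [hrw]
        _ ≤ ((C0 * Stmt6.W m a v p) * (C0 * Stmt6.W m a v p)) * p.1 :=
            mul_le_mul_of_nonneg_right hsq hp1
        _ = C0^2 * (Stmt6.W m a v p)^2 * p.1 := by ring
        _ ≤ C0^2 * (N * ∑ x ∈ Stmt6.SS m, (D2 x.2 (Stmt6.wfun a x.1 v) p)^2) * p.1 := by
            have hC02 : (0:ℝ) ≤ C0^2 := sq_nonneg _
            exact mul_le_mul_of_nonneg_right (mul_le_mul_of_nonneg_left hcs hC02) hp1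
        _ = g p := by
            rw [hgdef]
            simp only [← Finset.sum_mul]
            ring
    have hf0 : ∀ p ∈ V, 0 ≤ fα p := by
      intro p hp
      have := (hVpos p hp).le
      rw [hfα]
      have h1 : 0 ≤ rho2 p ^ (2*((wt2 α : ℝ) - a)) := Real.rpow_nonneg (Stmt6.rho2_nonneg p) _
      positivity
    have hcf : ContinuousOn fα V := by
      rw [hfα]
      apply ContinuousOn.mul
      · apply ContinuousOn.mul
        · apply ContinuousOn.rpow_const hcontrho.continuousOn
          intro p hp
          exact Or.inl (Stmt6.rho2_pos (hVpos p hp)).ne'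
        · exact ((Stmt6.contDiffOn_D2 hVo hv α).continuousOn).pow 2
      · exact continuous_fst.continuousOn
    have hmeas : AEStronglyMeasurable fα (volume.restrict V) :=
      hcf.aestronglyMeasurable hVo.measurableSet
    have hfInt : Integrable fα (volume.restrict V) := by
      refine hg.mono' hmeas ?_
      refine (ae_restrict_iff' hVo.measurableSet).2 (Filter.Eventually.of_forall ?_)
      intro p hp
      rw [Real.norm_eq_abs, abs_of_nonneg (hf0 p hp)]
      exact hfg p hp
    have hle : (∫ p in V, fα p) ≤ ∫ p in V, g p :=
      setIntegral_mono_on hfInt hg hVo.measurableSet hfg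
    have hIg : (∫ p in V, g p) = C0^2 * N * RHS := by
      have e1 : (∫ p in V, g p)
          = C0^2 * N * ∫ p in V, ∑ x ∈ Stmt6.SS m, (D2 x.2 (Stmt6.wfun a x.1 v) p)^2 * p.1 :=
        MeasureTheory.integral_const_mul _ _
      rw [e1, integral_finset_sum _ hIx, hRHS]
      congr 1
      rw [Stmt6.SS, Finset.sum_sigma]
      rfl
    calc (∫ p in V, fα p) ≤ ∫ p in V, g p := hle
      _ = C0^2 * N * RHS := hIg
  calc K2 V m a v
      = ∑ α ∈ idx2 m, ∫ p in V, rho2 p ^ (2*((wt2 α : ℝ) - a)) * (D2 α v p)^2 * p.1 := rfl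
    _ ≤ ∑ _α ∈ idx2 m, (C0^2 * N * RHS) := Finset.sum_le_sum hper
    _ = ((idx2 m).card : ℝ) * (C0^2 * N * RHS) := by rw [Finset.sum_const, nsmul_eq_mul]
    _ = ((idx2 m).card : ℝ) * C0^2 * N * RHS := by ring
end
end
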